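/- Let H be a symmetric md×md matrix of the form H = γ⁻¹(I − 2τQ)((I − τQ) − S(I − 2τQ)) where Q is the block-averaging projection, τ = 1/4, and S is a symmetric matrix commuting structure such that (1/(1+γ/L₁))I ⪯ S ⪯ (1/(1+γ/L₂))I with 0 < L₁ ≤ L₂. Then for every z, γ·zᵀHz ≤ ‖z‖², i.e., H ⪯ (1/γ)I. -/
import Mathlib


noncomputable section
open scoped RealInnerProductSpace

/-- Upper bound on the Hessian of the Douglas–Rachford envelope: with `τ = 1/4`,
`Q` a symmetric projection and `(1/(1+γ/L₁))I ⪯ S ⪯ (1/(1+γ/L₂))I`, the operator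
`H = γ⁻¹(I − 2τQ)((I − τQ) − S(I − 2τQ))` satisfies `γ·zᵀHz ≤ ‖z‖²`, i.e. `H ⪯ (1/γ)I`. -/
theorem stmt8 {n : ℕ}
    (Q S H : EuclideanSpace ℝ (Fin n) →L[ℝ] EuclideanSpace ℝ (Fin n))
    (γ L₁ L₂ τ : ℝ) (hγ : 0 < γ) (hL₁ : 0 < L₁) (hL : L₁ ≤ L₂) (hτ : τ = 1 / 4)
    (hQsym : ∀ z w, ⟪Q z, w⟫ = ⟪z, Q w⟫) (hQproj : Q * Q = Q)
    (hSsym : ∀ z w, ⟪S z, w⟫ = ⟪z, S w⟫)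
    (hSlb : ∀ z, (1 / (1 + γ / L₁)) * ‖z‖ ^ 2 ≤ ⟪S z, z⟫)
    (hSub : ∀ z, ⟪S z, z⟫ ≤ (1 / (1 + γ / L₂)) * ‖z‖ ^ 2)
    (hH : H = γ⁻¹ • (((1 : EuclideanSpace ℝ (Fin n) →L[ℝ] EuclideanSpace ℝ (Fin n)) -
        (2 * τ) • Q) * ((1 - τ • Q) - S * (1 - (2 * τ) • Q)))) :
    ∀ z, γ * ⟪H z, z⟫ ≤ ‖z‖ ^ 2 := by
  subst hτ hH
  intro z
  set p : EuclideanSpace ℝ (Fin n) := z - (2 * (1/4 : ℝ)) • Q z with hp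
  have hQz : Q (Q z) = Q z := by
    have := congrArg (fun T => T z) hQproj
    simpa [ContinuousLinearMap.mul_apply] using this
  have hQQz : ⟪Q z, Q z⟫ = ⟪Q z, z⟫ := by
    rw [← hQsym]; rw [hQz]
  have hQnn : 0 ≤ ⟪Q z, z⟫ := by
    have : ⟪Q z, z⟫ = ‖Q z‖ ^ 2 := by
      rw [← hQQz, real_inner_self_eq_norm_sq]
    rw [this]; positivity
  -- expand H z
  have happ : γ * ⟪(γ⁻¹ • (((1 : EuclideanSpace ℝ (Fin n) →L[ℝ] EuclideanSpace ℝ (Fin n)) -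
        (2 * (1/4 : ℝ)) • Q) * ((1 - (1/4 : ℝ) • Q) - S * (1 - (2 * (1/4 : ℝ)) • Q)))) z, z⟫
      = ⟪(((1 : EuclideanSpace ℝ (Fin n) →L[ℝ] EuclideanSpace ℝ (Fin n)) -
        (2 * (1/4 : ℝ)) • Q) * ((1 - (1/4 : ℝ) • Q) - S * (1 - (2 * (1/4 : ℝ)) • Q))) z, z⟫ := by
    rw [ContinuousLinearMap.smul_apply, real_inner_smul_left]
    field_simp
  rw [happ]
  -- let B z be the inner factor applied to z
  have hBz : (((1 - (1/4 : ℝ) • Q) - S * (1 - (2 * (1/4 : ℝ)) • Q)) z)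
      = z - (1/4 : ℝ) • Q z - S p := by
    simp [hp, ContinuousLinearMap.mul_apply, ContinuousLinearMap.sub_apply,
      ContinuousLinearMap.smul_apply, ContinuousLinearMap.one_apply]
  have hPsym : ∀ w : EuclideanSpace ℝ (Fin n),
      ⟪(((1 : EuclideanSpace ℝ (Fin n) →L[ℝ] EuclideanSpace ℝ (Fin n)) -
        (2 * (1/4 : ℝ)) • Q)) w, z⟫ = ⟪w, p⟫ := by
    intro w
    simp only [ContinuousLinearMap.sub_apply, ContinuousLinearMap.smul_apply,
      ContinuousLinearMap.one_apply, hp, inner_sub_left, inner_sub_right,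
      real_inner_smul_left, real_inner_smul_right, hQsym]
  have hmain : ⟪(((1 : EuclideanSpace ℝ (Fin n) →L[ℝ] EuclideanSpace ℝ (Fin n)) -
        (2 * (1/4 : ℝ)) • Q) * ((1 - (1/4 : ℝ) • Q) - S * (1 - (2 * (1/4 : ℝ)) • Q))) z, z⟫
      = ⟪z - (1/4 : ℝ) • Q z - S p, p⟫ := by
    rw [ContinuousLinearMap.mul_apply, hPsym, hBz]
  rw [hmain]
  have hSpos : 0 ≤ ⟪S p, p⟫ := by
    refine le_trans ?_ (hSlb p)
    have h1 : 0 < 1 + γ / L₁ := by positivity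
    positivity
  have hexp : ⟪z - (1/4 : ℝ) • Q z - S p, p⟫
      = ‖z‖ ^ 2 - (5/8 : ℝ) * ⟪Q z, z⟫ - ⟪S p, p⟫ := by
    simp only [hp, inner_sub_left, inner_sub_right, real_inner_smul_left,
      real_inner_smul_right]
    rw [real_inner_self_eq_norm_sq]
    rw [real_inner_comm z (Q z)] at hQQz ⊢
    rw [hQQz]
    ring
  rw [hexp]
  linarith
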